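/- Let B be a nonzero m×n complex matrix, let ‖·‖ be a unitarily invariant norm on the space of complex m×n matrices, and let H₁ be an m×m Hermitian matrix and H₂ an n×n Hermitian matrix. Then the function h(t) = log ‖e^{tH₁} B e^{tH₂}‖ is convex on ℝ. -/

import Mathlib

open Matrix

/-- The matrix exponential of a square complex matrix. -/
noncomputable def mexp {k : ℕ} (A : Matrix (Fin k) (Fin k) ℂ) : Matrix (Fin k) (Fin k) ℂ :=
  NormedSpace.exp A

/-- `N` is a unitarily invariant matrix norm on `m × n` complex matrices:
it is a norm and satisfies `N (U * A * V) = N A` for all unitary `U`, `V`. -/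
structure IsUnitarilyInvariantNorm (m n : ℕ) (N : Matrix (Fin m) (Fin n) ℂ → ℝ) : Prop where
  eq_zero_iff : ∀ A, N A = 0 ↔ A = 0
  smul : ∀ (c : ℂ) (A), N (c • A) = ‖c‖ * N A
  triangle : ∀ A B, N (A + B) ≤ N A + N B
  unitary_inv : ∀ (U : Matrix (Fin m) (Fin m) ℂ) (V : Matrix (Fin n) (Fin n) ℂ),
    U ∈ Matrix.unitaryGroup (Fin m) ℂ → V ∈ Matrix.unitaryGroup (Fin n) ℂ →
    ∀ A, N (U * A * V) = N A

section Auxiliary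

open Complex Set Complex.HadamardThreeLines NormedSpace

/-- Abstract form: if `F : ℂ → E` is entire, its norm depends only on the real part, and
never vanishes on the reals, then `t ↦ log ‖F t‖` is convex. -/
theorem convexOn_log_norm_aux {E : Type*} [NormedAddCommGroup E] [NormedSpace ℂ E]
    (F : ℂ → E) (hF : Differentiable ℂ F)
    (hnorm : ∀ z : ℂ, ‖F z‖ = ‖F (z.re : ℂ)‖)
    (hne : ∀ x : ℝ, ‖F (x : ℂ)‖ ≠ 0) :
    ConvexOn ℝ Set.univ (fun t : ℝ => Real.log ‖F (t : ℂ)‖) := by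
  refine ⟨convex_univ, ?_⟩
  intro s _ t _ a b ha hb hab
  set G : ℂ → E := fun z => F ((s : ℂ) + z * ((t : ℂ) - (s : ℂ))) with hG
  have hre : ∀ z : ℂ, ((s : ℂ) + z * ((t : ℂ) - (s : ℂ))).re = s + z.re * (t - s) := by
    intro z
    simp [Complex.add_re, Complex.mul_re, Complex.sub_re, Complex.sub_im]
  have hGnorm : ∀ z : ℂ, ‖G z‖ = ‖F ((s + z.re * (t - s) : ℝ) : ℂ)‖ := by
    intro z
    rw [hG]
    simp only
    rw [hnorm ((s : ℂ) + z * ((t : ℂ) - (s : ℂ))), hre z]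
  have hGd : Differentiable ℂ G :=
    hF.comp ((differentiable_const _).add (differentiable_id.mul (differentiable_const _)))
  have hcont : Continuous fun x : ℝ => ‖F ((s + x * (t - s) : ℝ) : ℂ)‖ := by
    apply Continuous.norm
    exact hF.continuous.comp (Complex.continuous_ofReal.comp (by continuity))
  obtain ⟨C, hC⟩ := ((isCompact_Icc (a := (0:ℝ)) (b := 1)).image hcont).bddAbove
  have hB : BddAbove ((norm ∘ G) '' verticalClosedStrip 0 1) := by
    refine ⟨C, ?_⟩
    rintro y ⟨z, hz, rfl⟩
    have : ‖G z‖ ∈ (fun x : ℝ => ‖F ((s + x * (t - s) : ℝ) : ℂ)‖) '' Icc 0 1 :=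
      ⟨z.re, hz, (hGnorm z).symm⟩
    exact hC this
  have h0 : ∀ z ∈ re ⁻¹' {(0:ℝ)}, ‖G z‖ ≤ ‖F (s : ℂ)‖ := by
    intro z hz
    rw [hGnorm z, Set.mem_preimage, Set.mem_singleton_iff] at *
    rw [hz]
    simp
  have h1 : ∀ z ∈ re ⁻¹' {(1:ℝ)}, ‖G z‖ ≤ ‖F (t : ℂ)‖ := by
    intro z hz
    rw [Set.mem_preimage, Set.mem_singleton_iff] at hz
    rw [hGnorm z, hz]
    norm_num
  have hzmem : (b : ℂ) ∈ verticalClosedStrip 0 1 := by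
    simp only [verticalClosedStrip, Set.mem_preimage, Complex.ofReal_re, Set.mem_Icc]
    exact ⟨hb, by linarith⟩
  have key := norm_le_interp_of_mem_verticalClosedStrip₀₁' G hzmem hGd.diffContOnCl hB h0 h1
  have hGb : G (b : ℂ) = F ((a * s + b * t : ℝ) : ℂ) := by
    rw [hG]
    simp only
    congr 1
    push_cast
    have : (a : ℂ) = 1 - (b : ℂ) := by
      have : (a : ℝ) = 1 - b := by linarith
      rw [this]; push_cast; ring
    rw [this]; ring
  rw [hGb, Complex.ofReal_re] at key
  have hs : 0 < ‖F (s : ℂ)‖ := lt_of_le_of_ne (norm_nonneg _) (Ne.symm (hne s))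
  have ht : 0 < ‖F (t : ℂ)‖ := lt_of_le_of_ne (norm_nonneg _) (Ne.symm (hne t))
  have hpos : 0 < ‖F ((a * s + b * t : ℝ) : ℂ)‖ :=
    lt_of_le_of_ne (norm_nonneg _) (Ne.symm (hne _))
  have hcalc : Real.log ‖F ((a * s + b * t : ℝ) : ℂ)‖ ≤
      Real.log (‖F (s : ℂ)‖ ^ (1 - b) * ‖F (t : ℂ)‖ ^ b) :=
    Real.log_le_log hpos key
  rw [Real.log_mul (by positivity) (by positivity), Real.log_rpow hs, Real.log_rpow ht] at hcalc
  have hab' : 1 - b = a := by linarith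
  rw [hab'] at hcalc
  simpa [smul_eq_mul] using hcalc

/-- `exp` of a purely imaginary multiple of a Hermitian matrix is unitary. -/
theorem exp_smul_I_mem_unitary {k : ℕ} (H : Matrix (Fin k) (Fin k) ℂ) (hH : H.IsHermitian)
    (y : ℝ) : exp (((y : ℂ) * I) • H) ∈ Matrix.unitaryGroup (Fin k) ℂ := by
  rw [Matrix.mem_unitaryGroup_iff]
  have hstar : star (exp (((y : ℂ) * I) • H)) = exp (-(((y : ℂ) * I) • H)) := by
    have : (exp (((y : ℂ) * I) • H))ᴴ = exp ((((y : ℂ) * I) • H)ᴴ) :=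
      (Matrix.exp_conjTranspose _).symm
    rw [Matrix.star_eq_conjTranspose, this]
    congr 1
    rw [Matrix.conjTranspose_smul, hH.eq, ← neg_smul]
    congr 1
    simp [Complex.ext_iff]
  rw [hstar, ← Matrix.exp_add_of_commute (((y : ℂ) * I) • H) (-(((y : ℂ) * I) • H)) (Commute.neg_right (Commute.refl _)),
    add_neg_cancel, NormedSpace.exp_zero]

/-- Splitting `exp (z • H)` into real and imaginary parts. -/
theorem exp_smul_split {k : ℕ} (H : Matrix (Fin k) (Fin k) ℂ) (z : ℂ) :
    exp (z • H) = exp (((z.im : ℂ) * I) • H) * exp ((z.re : ℂ) • H) ∧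
    exp (z • H) = exp ((z.re : ℂ) • H) * exp (((z.im : ℂ) * I) • H) := by
  have hz : z • H = ((z.im : ℂ) * I) • H + (z.re : ℂ) • H := by
    rw [← add_smul]
    congr 1
    rw [add_comm]
    exact (Complex.re_add_im z).symm
  have hcomm : Commute (((z.im : ℂ) * I) • H) ((z.re : ℂ) • H) :=
    ((Commute.refl H).smul_left _).smul_right _
  exact ⟨by rw [hz, Matrix.exp_add_of_commute _ _ hcomm],
    by rw [hz, add_comm, Matrix.exp_add_of_commute _ _ hcomm.symm]⟩

/-- Each entry of `z ↦ exp (z • H)` is an entire function. -/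
theorem diff_exp_entry {k : ℕ} (H : Matrix (Fin k) (Fin k) ℂ) (i j : Fin k) :
    Differentiable ℂ fun z : ℂ => exp (z • H) i j := by
  letI : SeminormedRing (Matrix (Fin k) (Fin k) ℂ) := Matrix.linftyOpSemiNormedRing
  letI : NormedRing (Matrix (Fin k) (Fin k) ℂ) := Matrix.linftyOpNormedRing
  letI : NormedAlgebra ℂ (Matrix (Fin k) (Fin k) ℂ) := Matrix.linftyOpNormedAlgebra
  have hexp : Differentiable ℂ (fun z : ℂ => exp (z • H)) := fun z =>
    (hasDerivAt_exp_smul_const H z).differentiableAt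
  let L : Matrix (Fin k) (Fin k) ℂ →ₗ[ℂ] ℂ :=
    { toFun := fun X => X i j, map_add' := fun _ _ => rfl, map_smul' := fun _ _ => rfl }
  have hLc : Continuous L := L.continuous_of_finiteDimensional
  exact (⟨L, hLc⟩ : Matrix (Fin k) (Fin k) ℂ →L[ℂ] ℂ).differentiable.comp hexp

/-- Each entry of `z ↦ exp (z•H₁) * B * exp (z•H₂)` is an entire function. -/
theorem diff_entry {m n : ℕ} (B : Matrix (Fin m) (Fin n) ℂ)
    (H₁ : Matrix (Fin m) (Fin m) ℂ) (H₂ : Matrix (Fin n) (Fin n) ℂ) (i : Fin m) (j : Fin n) :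
    Differentiable ℂ fun z : ℂ => (exp (z • H₁) * B * exp (z • H₂)) i j := by
  simp only [Matrix.mul_apply]
  apply Differentiable.fun_sum
  intro l _
  apply Differentiable.mul
  · apply Differentiable.fun_sum
    intro p _
    exact (diff_exp_entry H₁ i p).mul (differentiable_const _)
  · exact diff_exp_entry H₂ l j

end Auxiliary

/-- Type synonym for `m × n` complex matrices, to carry the custom norm `N`. -/
def MatN (m n : ℕ) : Type := Matrix (Fin m) (Fin n) ℂ

noncomputable instance (m n : ℕ) : AddCommGroup (MatN m n) :=
  inferInstanceAs (AddCommGroup (Matrix (Fin m) (Fin n) ℂ))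

noncomputable instance (m n : ℕ) : Module ℂ (MatN m n) :=
  inferInstanceAs (Module ℂ (Matrix (Fin m) (Fin n) ℂ))

instance (m n : ℕ) : FiniteDimensional ℂ (MatN m n) :=
  inferInstanceAs (FiniteDimensional ℂ (Matrix (Fin m) (Fin n) ℂ))

open NormedSpace Complex in
/-- For a nonzero matrix `B`, a unitarily invariant norm `‖·‖`, and Hermitian matrices
`H₁, H₂`, the function `h(t) = log ‖e^{tH₁} B e^{tH₂}‖` is convex on `ℝ`. -/
theorem log_norm_exp_convex (m n : ℕ) (B : Matrix (Fin m) (Fin n) ℂ) (hB : B ≠ 0)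
    (N : Matrix (Fin m) (Fin n) ℂ → ℝ) (hN : IsUnitarilyInvariantNorm m n N)
    (H₁ : Matrix (Fin m) (Fin m) ℂ) (H₂ : Matrix (Fin n) (Fin n) ℂ)
    (hH₁ : H₁.IsHermitian) (hH₂ : H₂.IsHermitian) :
    ConvexOn ℝ Set.univ (fun t : ℝ =>
      Real.log (N (mexp ((t : ℂ) • H₁) * B * mexp ((t : ℂ) • H₂)))) := by
  letI : NormedAddCommGroup (MatN m n) := AddGroupNorm.toNormedAddCommGroup
    { toFun := N
      map_zero' := (hN.eq_zero_iff 0).2 rfl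
      add_le' := hN.triangle
      neg' := fun A => by
        have h := hN.smul (-1) A
        have h2 : (-1 : ℂ) • (A : Matrix (Fin m) (Fin n) ℂ) = -(A : Matrix (Fin m) (Fin n) ℂ) :=
          neg_one_smul ℂ _
        have h3 : N (-(A : Matrix (Fin m) (Fin n) ℂ)) = ‖(-1 : ℂ)‖ * N A := by
          rw [← h2]; exact h
        simpa using h3
      eq_zero_of_map_eq_zero' := fun A hA => (hN.eq_zero_iff A).1 hA }
  letI : NormedSpace ℂ (MatN m n) := { norm_smul_le := fun c A => le_of_eq (hN.smul c A) }
  set F : ℂ → MatN m n := fun z => (exp (z • H₁) * B * exp (z • H₂) :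
    Matrix (Fin m) (Fin n) ℂ) with hF
  -- differentiability
  have hFd : Differentiable ℂ F := by
    have hFeq : F = fun z => ∑ i : Fin m, ∑ j : Fin n,
        ((exp (z • H₁) * B * exp (z • H₂)) i j) •
          (Matrix.single i j 1 : Matrix (Fin m) (Fin n) ℂ) := by
      funext z
      show (exp (z • H₁) * B * exp (z • H₂)) = _
      conv_lhs => rw [Matrix.matrix_eq_sum_single (exp (z • H₁) * B * exp (z • H₂))]
      refine Finset.sum_congr rfl fun i _ => Finset.sum_congr rfl fun j _ => ?_
      rw [Matrix.smul_single, smul_eq_mul, mul_one]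
    rw [hFeq]
    apply Differentiable.fun_sum
    intro i _
    apply Differentiable.fun_sum
    intro j _
    exact (diff_entry B H₁ H₂ i j).smul_const _
  -- norm depends only on the real part
  have hnorm : ∀ z : ℂ, ‖F z‖ = ‖F (z.re : ℂ)‖ := by
    intro z
    show N (exp (z • H₁) * B * exp (z • H₂)) =
      N (exp ((z.re : ℂ) • H₁) * B * exp ((z.re : ℂ) • H₂))
    have e₁ := (exp_smul_split H₁ z).1
    have e₂ := (exp_smul_split H₂ z).2
    rw [e₁, e₂]
    have := hN.unitary_inv (exp (((z.im : ℂ) * I) • H₁)) (exp (((z.im : ℂ) * I) • H₂))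
      (exp_smul_I_mem_unitary H₁ hH₁ z.im) (exp_smul_I_mem_unitary H₂ hH₂ z.im)
      (exp ((z.re : ℂ) • H₁) * B * exp ((z.re : ℂ) • H₂))
    rw [← this]
    congr 1
    simp only [Matrix.mul_assoc]
  -- nonvanishing on the reals
  have hne : ∀ x : ℝ, ‖F (x : ℂ)‖ ≠ 0 := by
    intro x h0
    have hmat : (exp (((x : ℝ) : ℂ) • H₁) * B * exp (((x : ℝ) : ℂ) • H₂) :
        Matrix (Fin m) (Fin n) ℂ) = 0 := by
      have : N (exp (((x : ℝ) : ℂ) • H₁) * B * exp (((x : ℝ) : ℂ) • H₂)) = 0 := h0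
      exact (hN.eq_zero_iff _).1 this
    have hu : IsUnit (exp (((x : ℝ) : ℂ) • H₁)) := Matrix.isUnit_exp _
    have hv : IsUnit (exp (((x : ℝ) : ℂ) • H₂)) := Matrix.isUnit_exp _
    have hu' := (Matrix.isUnit_iff_isUnit_det _).1 hu
    have hv' := (Matrix.isUnit_iff_isUnit_det _).1 hv
    have hinv1 : (exp (((x : ℝ) : ℂ) • H₁))⁻¹ * exp (((x : ℝ) : ℂ) • H₁) = 1 :=
      Matrix.nonsing_inv_mul _ hu'
    have hinv2 : exp (((x : ℝ) : ℂ) • H₂) * (exp (((x : ℝ) : ℂ) • H₂))⁻¹ = 1 :=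
      Matrix.mul_nonsing_inv _ hv'
    have h2 : B = 0 := by
      calc B = ((exp (((x : ℝ) : ℂ) • H₁))⁻¹ * exp (((x : ℝ) : ℂ) • H₁)) * B *
            (exp (((x : ℝ) : ℂ) • H₂) * (exp (((x : ℝ) : ℂ) • H₂))⁻¹) := by
            rw [hinv1, hinv2, Matrix.one_mul, Matrix.mul_one]
        _ = (exp (((x : ℝ) : ℂ) • H₁))⁻¹ *
            (exp (((x : ℝ) : ℂ) • H₁) * B * exp (((x : ℝ) : ℂ) • H₂)) *
            (exp (((x : ℝ) : ℂ) • H₂))⁻¹ := by simp only [Matrix.mul_assoc]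
        _ = 0 := by rw [hmat, Matrix.mul_zero, Matrix.zero_mul]
    exact hB h2
  have hconv := convexOn_log_norm_aux F hFd hnorm hne
  exact hconv
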